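/- Let m, n be positive integers, σ : {1,…,n} → {1,…,m}, let a_1,…,a_n, ħ be nonzero complex numbers and 0 < |q| < 1, and define Φ_f := ∏_{(j,k): σ(j)<σ(k)} Φ(q a_k/a_j)/Φ(ħ^{-1} a_k/a_j). Then for every i ∈ {1,…,n}, the value of Φ_f with a_i replaced by q a_i, divided by Φ_f, equals ∏_{j: σ(j)<σ(i)} (1 − ħ^{-1}a_i/a_j)/(1 − q a_i/a_j) · ∏_{j: σ(j)>σ(i)} (1 − a_j/a_i)/(1 − a_j/(qħ a_i)), whenever all occurring denominators are nonzero. -/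

import Mathlib

open Complex Filter

lemma multipliable_phi (q x : ℂ) (hq : ‖q‖ < 1) :
    Multipliable (fun i : ℕ => 1 - x * q ^ i) := by
  by_cases hz : ∃ i, 1 - x * q ^ i = 0
  · exact ⟨0, hasProd_zero_of_exists_eq_zero hz⟩
  push_neg at hz
  have hs : Summable (fun n : ℕ => Complex.log (1 - x * q ^ n)) := by
    have hgeo : Summable (fun n : ℕ => (3 / 2 : ℝ) * (‖x‖ * ‖q‖ ^ n)) :=
      ((summable_geometric_of_lt_one (norm_nonneg q) hq).mul_left _).mul_left _
    refine hgeo.of_norm_bounded_eventually_nat ?_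
    have ht : Filter.Tendsto (fun n : ℕ => ‖x‖ * ‖q‖ ^ n) atTop (nhds 0) := by
      simpa using (tendsto_pow_atTop_nhds_zero_of_lt_one (norm_nonneg q) hq).const_mul
        ‖x‖
    filter_upwards [ht.eventually_le_const (by norm_num : (0:ℝ) < 1/2)] with n hn
    have hb : ‖-(x * q ^ n)‖ ≤ 1 / 2 := by
      simpa [norm_mul, norm_pow] using hn
    have := Complex.norm_log_one_add_half_le_self hb
    simpa [sub_eq_add_neg, norm_mul, norm_pow] using this
  exact Complex.multipliable_of_summable_log hs

/-- `Φ(x) = ∏_{i≥0} (1 - x qⁱ)`. -/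
noncomputable def Phi (q x : ℂ) : ℂ := ∏' i : ℕ, (1 - x * q ^ i)

set_option maxHeartbeats 1000000 in
lemma Phi_rec (q x : ℂ) (hq : ‖q‖ < 1) :
    Phi q x = (1 - x) * Phi q (q * x) := by
  have hm : Multipliable (fun n : ℕ => 1 - x * q ^ (n + 1)) := by
    have := multipliable_phi q (q * x) hq
    refine this.congr fun n => ?_
    ring
  rw [Phi, tprod_eq_zero_mul' hm]
  congr 1
  · simp
  · rw [Phi]
    exact tprod_congr fun n => by ring

lemma div_cancel_aux (N D u v : ℂ) (hu : u ≠ 0) (hv : v ≠ 0) :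
    u * N / (v * D) * (v / u) = N / D := by
  have h1 : u * N / (v * D) * (v / u) = (N * (v * u)) / (D * (v * u)) := by
    rw [div_mul_div_comm]; congr 1 <;> ring
  rw [h1, mul_div_mul_right _ _ (mul_ne_zero hv hu)]

/-- The explicit infinite product `Φ_f = Φ((q - ħ⁻¹)𝒫|_f)` attached to the fixed point `σ`
of a co-separated bow variety all of whose D5 branes have weight one. -/
noncomputable def PhiCosep {m n : ℕ} (q h : ℂ) (σ : Fin n → Fin m) (a : Fin n → ℂ) : ℂ :=
  ∏ j : Fin n, ∏ k : Fin n,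
    if σ j < σ k then Phi q (q * (a k / a j)) / Phi q (h⁻¹ * (a k / a j)) else 1

set_option maxHeartbeats 1000000 in
/-- The q-shift transformation `T_{a_i}(Φ_f)/Φ_f` in the co-separated case. -/
theorem PhiCosep_qshift {m n : ℕ} (hm : 0 < m) (hn : 0 < n) (σ : Fin n → Fin m)
    (q h : ℂ) (a : Fin n → ℂ) (i : Fin n)
    (hq0 : q ≠ 0) (hh0 : h ≠ 0) (ha : ∀ j, a j ≠ 0)
    (hq1 : 0 < ‖q‖) (hq2 : ‖q‖ < 1)
    (hPhi : PhiCosep q h σ a ≠ 0)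
    (hden1 : ∀ A ∈ ({a, Function.update a i (q * a i)} : Set (Fin n → ℂ)),
      ∀ j k : Fin n, σ j < σ k → Phi q (h⁻¹ * (A k / A j)) ≠ 0)
    (hden2 : ∀ j, σ j < σ i → 1 - q * (a i / a j) ≠ 0)
    (hden3 : ∀ j, σ i < σ j → 1 - a j / (q * h * a i) ≠ 0) :
    PhiCosep q h σ (Function.update a i (q * a i)) / PhiCosep q h σ a =
      (∏ j : Fin n, if σ j < σ i then (1 - h⁻¹ * (a i / a j)) / (1 - q * (a i / a j)) else 1) *
        ∏ j : Fin n, if σ i < σ j then (1 - a j / a i) / (1 - a j / (q * h * a i)) else 1 := by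
  set A := Function.update a i (q * a i) with hAdef
  have hAi : A i = q * a i := Function.update_self i (q * a i) a
  have hAne : ∀ j, j ≠ i → A j = a j := fun j hj => Function.update_of_ne hj (q * a i) a
  set P : Fin n → ℂ := fun k => (1 - a k / a i) / (1 - a k / (q * h * a i)) with hP
  set Q : Fin n → ℂ := fun j => (1 - h⁻¹ * (a i / a j)) / (1 - q * (a i / a j)) with hQ
  have key : ∀ j k : Fin n,
      (if σ j < σ k then Phi q (q * (A k / A j)) / Phi q (h⁻¹ * (A k / A j)) else 1)
      = (if σ j < σ k then Phi q (q * (a k / a j)) / Phi q (h⁻¹ * (a k / a j)) else 1)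
        * ((if j = i then (if σ i < σ k then P k else 1) else 1)
           * (if k = i then (if σ j < σ i then Q j else 1) else 1)) := by
    intro j k
    rcases eq_or_ne j i with hj | hj
    · rcases eq_or_ne k i with hk | hk
      · rw [hj, hk]; simp
      · rw [hj]
        rw [hAi, hAne k hk]
        by_cases hσ : σ i < σ k
        · simp only [hσ, hk, eq_self_iff_true, if_true, if_false, mul_one, hP]
          have e1 : q * (a k / (q * a i)) = a k / a i := by
            rw [← mul_div_assoc]
            exact mul_div_mul_left _ _ hq0
          have e2 : h⁻¹ * (a k / (q * a i)) = q⁻¹ * (h⁻¹ * (a k / a i)) := by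
            field_simp
            try ring
          have e3 : 1 - a k / (q * h * a i) = 1 - q⁻¹ * (h⁻¹ * (a k / a i)) := by
            have : a k / (q * h * a i) = q⁻¹ * (h⁻¹ * (a k / a i)) := by
              field_simp
              try ring
            rw [this]
          rw [e1, e2, e3, Phi_rec q (a k / a i) hq2,
            Phi_rec q (q⁻¹ * (h⁻¹ * (a k / a i))) hq2,
            mul_inv_cancel_left₀ hq0, div_mul_div_comm]
          ring
        · simp [hσ, hk]
    · rcases eq_or_ne k i with hk | hk
      · rw [hk]
        rw [hAi, hAne j hj]
        by_cases hσ : σ j < σ i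
        · simp only [hσ, hj, eq_self_iff_true, if_true, if_false, one_mul, hQ]
          have e1 : q * (q * a i / a j) = q * (q * (a i / a j)) := by ring
          have e2 : h⁻¹ * (q * a i / a j) = q * (h⁻¹ * (a i / a j)) := by ring
          rw [e1, e2]
          have r1 := Phi_rec q (q * (a i / a j)) hq2
          have r2 := Phi_rec q (h⁻¹ * (a i / a j)) hq2
          have hd2 : (1 - q * (a i / a j)) ≠ 0 := hden2 j hσ
          have hd1 : Phi q (h⁻¹ * (a i / a j)) ≠ 0 :=
            hden1 a (Set.mem_insert _ _) j i hσ
          have hd1' : (1 - h⁻¹ * (a i / a j)) ≠ 0 := by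
            intro hc; rw [r2, hc, zero_mul] at hd1; exact hd1 rfl
          have hd1'' : Phi q (q * (h⁻¹ * (a i / a j))) ≠ 0 := by
            intro hc; rw [r2, hc, mul_zero] at hd1; exact hd1 rfl
          rw [r1, r2]
          exact (div_cancel_aux _ _ _ _ hd2 hd1').symm
        · simp [hσ, hj]
      · rw [hAne j hj, hAne k hk]
        simp [hj, hk]
  have expand : PhiCosep q h σ A = PhiCosep q h σ a
        * ((∏ j : Fin n, if σ j < σ i then Q j else 1)
           * (∏ k : Fin n, if σ i < σ k then P k else 1)) := by
    rw [PhiCosep, PhiCosep]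
    calc (∏ j : Fin n, ∏ k : Fin n,
        if σ j < σ k then Phi q (q * (A k / A j)) / Phi q (h⁻¹ * (A k / A j)) else 1)
        = ∏ j : Fin n, ∏ k : Fin n,
            ((if σ j < σ k then Phi q (q * (a k / a j)) / Phi q (h⁻¹ * (a k / a j)) else 1)
              * ((if j = i then (if σ i < σ k then P k else 1) else 1)
                * (if k = i then (if σ j < σ i then Q j else 1) else 1))) := by
          exact Finset.prod_congr rfl fun j _ => Finset.prod_congr rfl fun k _ => key j k
      _ = (∏ j : Fin n, ∏ k : Fin n,
            if σ j < σ k then Phi q (q * (a k / a j)) / Phi q (h⁻¹ * (a k / a j)) else 1)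
          * ((∏ j : Fin n, ∏ k : Fin n, if j = i then (if σ i < σ k then P k else 1) else 1)
            * (∏ j : Fin n, ∏ k : Fin n, if k = i then (if σ j < σ i then Q j else 1) else 1)) := by
          simp only [Finset.prod_mul_distrib]
      _ = _ := by
          congr 1
          rw [mul_comm]
          congr 1
          · apply Finset.prod_congr rfl
            intro j _
            simp only [Finset.prod_ite_eq', Finset.mem_univ, if_true]
          · rw [Finset.prod_eq_single_of_mem i (Finset.mem_univ i)
              (fun b _ hb => by simp [hb])]
            simp
  rw [expand, mul_div_cancel_left₀ _ hPhi, hP, hQ]
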